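/- Let d ≥ 1, let O be a d×d real orthogonal matrix, and set μ = 2^{−d} Σ_{x ∈ {0,1}^d} ‖Ox‖₁. Then for every real t, 2^{−d} Σ_{x ∈ {0,1}^d} exp( t·(‖Ox‖₁ − μ) ) ≤ exp( t²d/2 ). In other words, for x uniform on {0,1}^d the random variable ‖Ox‖₁ is subgaussian with variance proxy d. -/

import Mathlib

set_option maxHeartbeats 1000000


open scoped BigOperators

/-- The `ℓ₁`-norm of a vector in `ℝ^d`. -/
noncomputable def l1Norm {d : ℕ} (v : Fin d → ℝ) : ℝ := ∑ j, |v j|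

/-- A real square matrix is orthogonal if `OᵀO = OOᵀ = I`. -/
def IsOrthogonalMat {d : ℕ} (O : Matrix (Fin d) (Fin d) ℝ) : Prop :=
  O.transpose * O = 1 ∧ O * O.transpose = 1

/-- Identification of a bit string in `{0,1}^d` with a real vector. -/
def bitVec {d : ℕ} (x : Fin d → Bool) : Fin d → ℝ := fun j => if x j then 1 else 0

open Finset

lemma exp_le_poly {x : ℝ} (h : |x| ≤ 1) :
    Real.exp x ≤ 1 + x + x^2/2 + x^3/6 + 5/96 * |x|^4 := by
  have hb := Real.exp_bound h (n := 4) (by norm_num)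
  have hs : ∑ m ∈ range 4, x ^ m / m.factorial = 1 + x + x^2/2 + x^3/6 := by
    norm_num [Finset.sum_range_succ, Nat.factorial]
  rw [hs] at hb
  have h2 := (abs_sub_le_iff.1 hb).1
  have h3 : (|x|^4 * ((Nat.succ 4 : ℝ) / ((Nat.factorial 4 : ℝ) * (4:ℕ)))) = 5/96 * |x|^4 := by
    norm_num [Nat.factorial]; ring
  rw [h3] at h2
  linarith

lemma I1 {a : ℝ} (h0 : 0 ≤ a) (h1 : a ≤ 1) :
    (1 + Real.exp (a - a^2/2)) * (1 + Real.exp (-a)) ≤ 4 := by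
  have hu0 : 0 ≤ a - a^2/2 := by nlinarith
  have hu1 : a - a^2/2 ≤ 1 := by nlinarith
  have hU := exp_le_poly (x := a - a^2/2) (by rw [abs_of_nonneg hu0]; exact hu1)
  have hV := exp_le_poly (x := -a) (by rw [abs_of_nonpos (by linarith)]; simpa)
  rw [abs_of_nonneg hu0] at hU
  rw [abs_of_nonpos (by linarith : -a ≤ 0)] at hV
  have hVe : Real.exp (-a) ≤ 1 - a + a^2/2 - a^3/6 + 5/96 * a^4 := by
    convert hV using 2 <;> ring
  -- monomial bounds
  have p3 : 0 ≤ a^3 := by positivity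
  have b4 : a^4 ≤ a^3 := by nlinarith
  have b5 : a^5 ≤ a^3 := by nlinarith [pow_le_one₀ h0 h1 (n:=2), pow_nonneg h0 2]
  have b6 : a^6 ≤ a^3 := by nlinarith [pow_le_one₀ h0 h1 (n:=3), pow_nonneg h0 3]
  have b7 : a^7 ≤ a^3 := by nlinarith [pow_le_one₀ h0 h1 (n:=4), pow_nonneg h0 4]
  have b8 : a^8 ≤ a^3 := by nlinarith [pow_le_one₀ h0 h1 (n:=5), pow_nonneg h0 5]
  have b9 : a^9 ≤ a^3 := by nlinarith [pow_le_one₀ h0 h1 (n:=6), pow_nonneg h0 6]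
  have b10 : a^10 ≤ a^3 := by nlinarith [pow_le_one₀ h0 h1 (n:=7), pow_nonneg h0 7]
  have b11 : a^11 ≤ a^3 := by nlinarith [pow_le_one₀ h0 h1 (n:=8), pow_nonneg h0 8]
  have b12 : a^12 ≤ a^3 := by nlinarith [pow_le_one₀ h0 h1 (n:=9), pow_nonneg h0 9]
  have hE1 : (0:ℝ) < Real.exp (a - a^2/2) := Real.exp_pos _
  have hE2 : (0:ℝ) < Real.exp (-a) := Real.exp_pos _
  nlinarith [mul_le_mul hU hVe (le_of_lt hE2) (by nlinarith : (0:ℝ) ≤ 1 + (a - a^2/2) + (a-a^2/2)^2/2 + (a-a^2/2)^3/6 + 5/96*(a-a^2/2)^4)]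

lemma I2 {a : ℝ} (h1 : 1 ≤ a) :
    (1 + Real.exp (1/2)) * (1 + Real.exp (-a)) ≤ 4 := by
  have e1 : Real.exp 1 < 2.7182818286 := Real.exp_one_lt_d9
  have e0 : 2.7182818283 < Real.exp 1 := Real.exp_one_gt_d9
  have hsq : Real.exp (1/2) * Real.exp (1/2) = Real.exp 1 := by
    rw [← Real.exp_add]; norm_num
  have h12 : Real.exp (1/2) ≤ 1.6488 := by nlinarith [Real.exp_pos (1/2:ℝ)]
  have hm : Real.exp (-a) ≤ Real.exp (-1) := Real.exp_le_exp.2 (by linarith)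
  have hinv : Real.exp (-1) * Real.exp 1 = 1 := by
    rw [← Real.exp_add]; norm_num [Real.exp_zero]
  have h3 : Real.exp (-1) ≤ 0.368 := by nlinarith [Real.exp_pos (-1:ℝ)]
  nlinarith [Real.exp_pos (-a), Real.exp_pos (1/2:ℝ)]

open Finset Set

noncomputable def Q1 (φ : ℝ → ℝ) (u : ℝ) : ℝ := ⨅ s : ℝ, (φ s + (u - s)^2/2)

lemma convexOn_inf {E F : Type*} [AddCommGroup E] [Module ℝ E] [AddCommGroup F] [Module ℝ F]
    (W : E → F → ℝ) (hW : ConvexOn ℝ Set.univ (fun p : E × F => W p.1 p.2))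
    (hbdd : ∀ e, BddBelow (Set.range (W e))) :
    ConvexOn ℝ Set.univ (fun e => ⨅ f, W e f) := by
  refine ⟨convex_univ, ?_⟩
  intro x _ y _ a b ha hb hab
  refine le_of_forall_pos_le_add ?_
  intro ε hε
  obtain ⟨f1, hf1⟩ := exists_lt_of_ciInf_lt
    (show (⨅ f, W x f) < (⨅ f, W x f) + ε/2 from lt_add_of_pos_right _ (half_pos hε))
  obtain ⟨f2, hf2⟩ := exists_lt_of_ciInf_lt
    (show (⨅ f, W y f) < (⨅ f, W y f) + ε/2 from lt_add_of_pos_right _ (half_pos hε))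
  have hkey := hW.2 (mem_univ (x, f1)) (mem_univ (y, f2)) ha hb hab
  have hpt : a • ((x, f1) : E × F) + b • (y, f2) = (a • x + b • y, a • f1 + b • f2) := rfl
  rw [hpt] at hkey
  calc (⨅ f, W (a • x + b • y) f) ≤ W (a • x + b • y) (a • f1 + b • f2) := ciInf_le (hbdd _) _
  _ ≤ a • W x f1 + b • W y f2 := hkey
  _ ≤ a • (⨅ f, W x f) + b • (⨅ f, W y f) + ε := by
      simp only [smul_eq_mul]
      have h1 : a * W x f1 ≤ a * ((⨅ f, W x f) + ε/2) := mul_le_mul_of_nonneg_left (le_of_lt hf1) ha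
      have h2 : b * W y f2 ≤ b * ((⨅ f, W y f) + ε/2) := mul_le_mul_of_nonneg_left (le_of_lt hf2) hb
      nlinarith [hε]

lemma Q1_lb {φ : ℝ → ℝ} {ℓ : ℝ} (hℓ : 0 ≤ ℓ)
    (hlip : ∀ s t, φ s ≤ φ t + ℓ * |s - t|) (u : ℝ) :
    ∀ s, φ u - ℓ^2/2 ≤ φ s + (u - s)^2/2 := by
  intro s
  have h1 := hlip u s
  have h2 : 0 ≤ |u - s| := abs_nonneg _
  nlinarith [sq_abs (u - s), sq_nonneg (|u - s| - ℓ)]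

lemma Q1_bdd {φ : ℝ → ℝ} {ℓ : ℝ} (hℓ : 0 ≤ ℓ)
    (hlip : ∀ s t, φ s ≤ φ t + ℓ * |s - t|) (u : ℝ) :
    BddBelow (Set.range fun s => φ s + (u - s)^2/2) :=
  ⟨φ u - ℓ^2/2, by rintro _ ⟨s, rfl⟩; exact Q1_lb hℓ hlip u s⟩

lemma onedim_core (φ : ℝ → ℝ) (hconv : ConvexOn ℝ Set.univ φ) (ℓ : ℝ) (hℓ : 0 ≤ ℓ)
    (hlip : ∀ s t, φ s ≤ φ t + ℓ * |s - t|) (a : ℝ) (hadef : φ 1 = φ 0 + a) (ha : 0 ≤ a) :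
    (Real.exp (Q1 φ 0) + Real.exp (Q1 φ 1)) * (Real.exp (-φ 0) + Real.exp (-φ 1)) ≤ 4 := by
  have hQ0 : Q1 φ 0 ≤ φ 0 := by
    calc Q1 φ 0 ≤ φ 0 + (0 - 0)^2/2 := ciInf_le (Q1_bdd hℓ hlip 0) 0
      _ = φ 0 := by norm_num
  have hEpos : (0:ℝ) < Real.exp (-φ 0) + Real.exp (-φ 1) := by positivity
  rcases le_or_gt a 1 with hle1 | hgt1
  · have hQ1 : Q1 φ 1 ≤ φ 0 + (a - a^2/2) := by
      have h1 : Q1 φ 1 ≤ φ (1 - a) + (1 - (1-a))^2/2 := ciInf_le (Q1_bdd hℓ hlip 1) (1-a)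
      have hcx := hconv.2 (Set.mem_univ (0:ℝ)) (Set.mem_univ (1:ℝ)) ha
        (by linarith : (0:ℝ) ≤ 1 - a) (by ring)
      have he : a • (0:ℝ) + (1-a) • (1:ℝ) = 1 - a := by simp
      rw [he, smul_eq_mul, smul_eq_mul] at hcx
      nlinarith [h1, hcx]
    calc (Real.exp (Q1 φ 0) + Real.exp (Q1 φ 1)) * (Real.exp (-φ 0) + Real.exp (-φ 1))
        ≤ (Real.exp (φ 0) + Real.exp (φ 0 + (a - a^2/2))) * (Real.exp (-φ 0) + Real.exp (-φ 1)) := by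
          apply mul_le_mul_of_nonneg_right _ (le_of_lt hEpos)
          exact add_le_add (Real.exp_le_exp.2 hQ0) (Real.exp_le_exp.2 hQ1)
      _ = (1 + Real.exp (a - a^2/2)) * (1 + Real.exp (-a)) := by
          rw [show -φ 1 = -φ 0 + (-a) by rw [hadef]; ring, Real.exp_add, Real.exp_add, Real.exp_neg]
          have := Real.exp_ne_zero (φ 0)
          field_simp
      _ ≤ 4 := I1 ha hle1
  · have hQ1 : Q1 φ 1 ≤ φ 0 + 1/2 := by
      calc Q1 φ 1 ≤ φ 0 + (1 - 0)^2/2 := ciInf_le (Q1_bdd hℓ hlip 1) 0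
        _ = φ 0 + 1/2 := by norm_num
    calc (Real.exp (Q1 φ 0) + Real.exp (Q1 φ 1)) * (Real.exp (-φ 0) + Real.exp (-φ 1))
        ≤ (Real.exp (φ 0) + Real.exp (φ 0 + 1/2)) * (Real.exp (-φ 0) + Real.exp (-φ 1)) := by
          apply mul_le_mul_of_nonneg_right _ (le_of_lt hEpos)
          exact add_le_add (Real.exp_le_exp.2 hQ0) (Real.exp_le_exp.2 hQ1)
      _ = (1 + Real.exp (1/2)) * (1 + Real.exp (-a)) := by
          rw [show -φ 1 = -φ 0 + (-a) by rw [hadef]; ring, Real.exp_add, Real.exp_add, Real.exp_neg]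
          have := Real.exp_ne_zero (φ 0)
          field_simp
      _ ≤ 4 := I2 (by linarith)

lemma onedim (φ : ℝ → ℝ) (hconv : ConvexOn ℝ Set.univ φ) (ℓ : ℝ) (hℓ : 0 ≤ ℓ)
    (hlip : ∀ s t, φ s ≤ φ t + ℓ * |s - t|) :
    (Real.exp (Q1 φ 0) + Real.exp (Q1 φ 1)) * (Real.exp (-φ 0) + Real.exp (-φ 1)) ≤ 4 := by
  rcases le_total (φ 0) (φ 1) with h | h
  · exact onedim_core φ hconv ℓ hℓ hlip (φ 1 - φ 0) (by ring) (by linarith)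
  · have hψc : ConvexOn ℝ Set.univ (fun s => φ (1 - s)) := by
      refine ⟨convex_univ, ?_⟩
      intro x _ y _ a b hha hhb hhab
      have he : 1 - (a • x + b • y) = a • (1 - x) + b • (1 - y) := by
        simp only [smul_eq_mul]; nlinarith [hhab]
      simp only [he]
      exact hconv.2 (Set.mem_univ _) (Set.mem_univ _) hha hhb hhab
    have hψlip : ∀ s t, φ (1 - s) ≤ φ (1 - t) + ℓ * |s - t| := by
      intro s t
      have h0 := hlip (1 - s) (1 - t)
      have he : |1 - s - (1 - t)| = |s - t| := by
        rw [show 1 - s - (1 - t) = -(s - t) by ring, abs_neg]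
      rw [he] at h0
      exact h0
    have hQψ : ∀ u, Q1 (fun s => φ (1 - s)) u = Q1 φ (1 - u) := by
      intro u
      apply le_antisymm
      · apply le_ciInf
        intro s
        calc Q1 (fun s => φ (1 - s)) u ≤ φ (1 - (1 - s)) + (u - (1 - s))^2/2 :=
              ciInf_le (Q1_bdd hℓ hψlip u) (1 - s)
          _ = φ s + (1 - u - s)^2/2 := by rw [show (1:ℝ) - (1 - s) = s by ring]; ring_nf
      · apply le_ciInf
        intro s
        calc Q1 φ (1 - u) ≤ φ (1 - s) + (1 - u - (1 - s))^2/2 :=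
              ciInf_le (Q1_bdd hℓ hlip (1 - u)) (1 - s)
          _ = φ (1 - s) + (u - s)^2/2 := by ring_nf
    have hcore := onedim_core (fun s => φ (1 - s)) hψc ℓ hℓ hψlip (φ 0 - φ 1)
      (by norm_num) (by linarith)
    rw [hQψ 0, hQψ 1] at hcore
    norm_num at hcore
    calc (Real.exp (Q1 φ 0) + Real.exp (Q1 φ 1)) * (Real.exp (-φ 0) + Real.exp (-φ 1))
        = (Real.exp (Q1 φ 1) + Real.exp (Q1 φ 0)) * (Real.exp (-φ 1) + Real.exp (-φ 0)) := by ring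
      _ ≤ 4 := hcore

noncomputable def Qinf {n : ℕ} (h : (Fin n → ℝ) → ℝ) (x : Fin n → ℝ) : ℝ :=
  ⨅ y : Fin n → ℝ, (h y + (∑ j, (x j - y j)^2) / 2)

noncomputable def rho {n : ℕ} (h : (Fin (n+1) → ℝ) → ℝ) (x' : Fin n → ℝ) (s : ℝ) : ℝ :=
  Qinf (fun y' => h (Fin.cons s y')) x'

section master

variable {n : ℕ}

lemma Qinf_lb {h : (Fin n → ℝ) → ℝ} {L : ℝ} (hL : 0 ≤ L)
    (hlip : ∀ x y, h x ≤ h y + L * Real.sqrt (∑ j, (x j - y j)^2)) (x : Fin n → ℝ) :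
    ∀ y, h x - L^2/2 ≤ h y + (∑ j, (x j - y j)^2)/2 := by
  intro y
  have h1 := hlip x y
  have h2 : (0:ℝ) ≤ ∑ j, (x j - y j)^2 := by positivity
  have h3 : Real.sqrt (∑ j, (x j - y j)^2) ^ 2 = ∑ j, (x j - y j)^2 := Real.sq_sqrt h2
  nlinarith [Real.sqrt_nonneg (∑ j, (x j - y j)^2), sq_nonneg (Real.sqrt (∑ j, (x j - y j)^2) - L)]

lemma Qinf_bdd {h : (Fin n → ℝ) → ℝ} {L : ℝ} (hL : 0 ≤ L)
    (hlip : ∀ x y, h x ≤ h y + L * Real.sqrt (∑ j, (x j - y j)^2)) (x : Fin n → ℝ) :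
    BddBelow (Set.range fun y => h y + (∑ j, (x j - y j)^2)/2) :=
  ⟨h x - L^2/2, by rintro _ ⟨y, rfl⟩; exact Qinf_lb hL hlip x y⟩

lemma Qinf_ge {h : (Fin n → ℝ) → ℝ} {L : ℝ} (hL : 0 ≤ L)
    (hlip : ∀ x y, h x ≤ h y + L * Real.sqrt (∑ j, (x j - y j)^2)) (x : Fin n → ℝ) :
    h x - L^2/2 ≤ Qinf h x :=
  le_ciInf (Qinf_lb hL hlip x)

lemma sum_cons_sq (u s : ℝ) (x' y' : Fin n → ℝ) :
    ∑ j : Fin (n+1), ((Fin.cons u x' : Fin (n+1) → ℝ) j - (Fin.cons s y' : Fin (n+1) → ℝ) j)^2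
      = (u - s)^2 + ∑ j, (x' j - y' j)^2 := by
  rw [Fin.sum_univ_succ]
  simp

lemma cons_smul_add (a b s t : ℝ) (x' y' : Fin n → ℝ) :
    (Fin.cons (a * s + b * t) (a • x' + b • y') : Fin (n+1) → ℝ)
      = a • (Fin.cons s x' : Fin (n+1) → ℝ) + b • (Fin.cons t y' : Fin (n+1) → ℝ) := by
  funext i
  refine Fin.cases ?_ ?_ i
  · simp
  · intro j; simp

lemma cons_convex {h : (Fin (n+1) → ℝ) → ℝ} (hconv : ConvexOn ℝ Set.univ h) (s : ℝ) :
    ConvexOn ℝ Set.univ (fun y' : Fin n → ℝ => h (Fin.cons s y')) := by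
  refine ⟨convex_univ, ?_⟩
  intro x' _ y' _ a b ha hb hab
  have he : (Fin.cons s (a • x' + b • y') : Fin (n+1) → ℝ)
      = a • (Fin.cons s x' : Fin (n+1) → ℝ) + b • (Fin.cons s y' : Fin (n+1) → ℝ) := by
    have := cons_smul_add a b s s x' y'
    rw [show a * s + b * s = s by linear_combination s * hab] at this
    exact this
  simp only [he]
  exact hconv.2 (Set.mem_univ _) (Set.mem_univ _) ha hb hab

lemma cons_lip {h : (Fin (n+1) → ℝ) → ℝ} {L : ℝ}
    (hlip : ∀ x y, h x ≤ h y + L * Real.sqrt (∑ j, (x j - y j)^2)) (s : ℝ) :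
    ∀ x' y' : Fin n → ℝ, h (Fin.cons s x') ≤ h (Fin.cons s y')
      + L * Real.sqrt (∑ j, (x' j - y' j)^2) := by
  intro x' y'
  have h1 := hlip (Fin.cons s x') (Fin.cons s y')
  rw [sum_cons_sq] at h1
  simpa using h1

lemma rho_convex {h : (Fin (n+1) → ℝ) → ℝ} {L : ℝ} (hL : 0 ≤ L)
    (hconv : ConvexOn ℝ Set.univ h)
    (hlip : ∀ x y, h x ≤ h y + L * Real.sqrt (∑ j, (x j - y j)^2)) (x' : Fin n → ℝ) :
    ConvexOn ℝ Set.univ (fun s => rho h x' s) := by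
  have hW : ConvexOn ℝ Set.univ (fun p : ℝ × (Fin n → ℝ) =>
      h (Fin.cons p.1 p.2) + (∑ j, (x' j - p.2 j)^2)/2) := by
    refine ⟨convex_univ, ?_⟩
    rintro ⟨s, u⟩ _ ⟨t, v⟩ _ a b ha hb hab
    have hpt : (a • ((s, u) : ℝ × (Fin n → ℝ)) + b • (t, v)) = (a * s + b * t, a • u + b • v) := rfl
    rw [hpt]
    simp only
    have hh := hconv.2 (Set.mem_univ (Fin.cons s u : Fin (n+1) → ℝ))
      (Set.mem_univ (Fin.cons t v : Fin (n+1) → ℝ)) ha hb hab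
    rw [← cons_smul_add] at hh
    have hq : ∑ j, (x' j - (a • u + b • v) j)^2
        ≤ a * (∑ j, (x' j - u j)^2) + b * (∑ j, (x' j - v j)^2) := by
      rw [Finset.mul_sum, Finset.mul_sum, ← Finset.sum_add_distrib]
      refine Finset.sum_le_sum ?_
      intro j _
      have : (x' j - (a • u + b • v) j) = a * (x' j - u j) + b * (x' j - v j) := by
        simp only [Pi.add_apply, Pi.smul_apply, smul_eq_mul]
        linear_combination (-(x' j)) * hab
      rw [this]
      nlinarith [sq_nonneg ((x' j - u j) - (x' j - v j)), mul_nonneg ha hb]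
    simp only [smul_eq_mul] at hh ⊢
    linarith
  have hbdd : ∀ s : ℝ, BddBelow (Set.range fun y' =>
      h (Fin.cons s y') + (∑ j, (x' j - y' j)^2)/2) := by
    intro s
    exact Qinf_bdd hL (cons_lip hlip s) x'
  have := convexOn_inf (fun s y' => h (Fin.cons s y') + (∑ j, (x' j - y' j)^2)/2) hW hbdd
  exact this

lemma rho_lip {h : (Fin (n+1) → ℝ) → ℝ} {L : ℝ} (hL : 0 ≤ L)
    (hlip : ∀ x y, h x ≤ h y + L * Real.sqrt (∑ j, (x j - y j)^2)) (x' : Fin n → ℝ) :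
    ∀ s t, rho h x' s ≤ rho h x' t + L * |s - t| := by
  intro s t
  have key : ∀ y', rho h x' s - L * |s - t| ≤ h (Fin.cons t y') + (∑ j, (x' j - y' j)^2)/2 := by
    intro y'
    have h1 : rho h x' s ≤ h (Fin.cons s y') + (∑ j, (x' j - y' j)^2)/2 :=
      ciInf_le (Qinf_bdd hL (cons_lip hlip s) x') y'
    have h2 := hlip (Fin.cons s y') (Fin.cons t y')
    rw [sum_cons_sq] at h2
    have h3 : ((s - t)^2 + ∑ j : Fin n, (y' j - y' j)^2) = (s - t)^2 := by simp
    rw [h3, Real.sqrt_sq_eq_abs] at h2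
    linarith
  have := le_ciInf key
  have h4 : (⨅ y' : Fin n → ℝ, (h (Fin.cons t y') + (∑ j, (x' j - y' j)^2)/2)) = rho h x' t := rfl
  linarith [this, h4 ▸ this]

lemma Qdecomp {h : (Fin (n+1) → ℝ) → ℝ} {L : ℝ} (hL : 0 ≤ L)
    (hlip : ∀ x y, h x ≤ h y + L * Real.sqrt (∑ j, (x j - y j)^2))
    (x' : Fin n → ℝ) (u : ℝ) :
    Qinf h (Fin.cons u x') ≤ Q1 (rho h x') u := by
  apply le_ciInf
  intro s
  have key : ∀ y', Qinf h (Fin.cons u x') - (u - s)^2/2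
      ≤ h (Fin.cons s y') + (∑ j, (x' j - y' j)^2)/2 := by
    intro y'
    have h1 : Qinf h (Fin.cons u x') ≤ h (Fin.cons s y')
        + (∑ j : Fin (n+1), ((Fin.cons u x' : Fin (n+1) → ℝ) j - (Fin.cons s y' : Fin (n+1) → ℝ) j)^2)/2 :=
      ciInf_le (Qinf_bdd hL hlip (Fin.cons u x')) (Fin.cons s y')
    rw [sum_cons_sq] at h1
    linarith
  have h2 := le_ciInf key
  have h3 : (⨅ y' : Fin n → ℝ, (h (Fin.cons s y') + (∑ j, (x' j - y' j)^2)/2)) = rho h x' s := rfl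
  rw [h3] at h2
  linarith

lemma bitVec_cons (c : Bool) (ε : Fin n → Bool) :
    bitVec (Fin.cons c ε) = Fin.cons (if c then (1:ℝ) else 0) (bitVec ε) := by
  funext i
  refine Fin.cases ?_ ?_ i
  · simp [bitVec]
  · intro j; simp [bitVec]

lemma sum_split {M : Type*} [AddCommMonoid M] (F : (Fin (n+1) → Bool) → M) :
    ∑ ε : Fin (n+1) → Bool, F ε = ∑ c : Bool, ∑ ε' : Fin n → Bool, F (Fin.cons c ε') := by
  calc ∑ ε : Fin (n+1) → Bool, F ε
      = ∑ p : Bool × (Fin n → Bool), F (Fin.cons p.1 p.2) := by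
        refine Fintype.sum_equiv (Fin.consEquiv (fun _ : Fin (n+1) => Bool)).symm _ _ (fun ε => ?_)
        show F ε = F (Fin.cons (ε 0) (fun i => ε i.succ))
        congr 1
        exact (Fin.cons_self_tail ε).symm
    _ = ∑ c : Bool, ∑ ε' : Fin n → Bool, F (Fin.cons c ε') := Fintype.sum_prod_type _

lemma cs2 (r0 r1 w0 w1 : ℝ) (hw0 : 0 ≤ w0) (hw1 : 0 ≤ w1) :
    (w0 + w1)^2 ≤ (Real.exp (-r0) + Real.exp (-r1))
      * (Real.exp r0 * w0^2 + Real.exp r1 * w1^2) := by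
  have k0 : Real.exp (-r0) * (Real.exp r0 * w0^2) = w0^2 := by
    rw [← mul_assoc, ← Real.exp_add]; simp
  have k1 : Real.exp (-r1) * (Real.exp r1 * w1^2) = w1^2 := by
    rw [← mul_assoc, ← Real.exp_add]; simp
  set X := Real.exp (-r0) * (Real.exp r1 * w1^2) with hX
  set Y := Real.exp (-r1) * (Real.exp r0 * w0^2) with hY
  have hXY : X * Y = (w0 * w1)^2 := by
    rw [hX, hY]
    have : Real.exp (-r0) * (Real.exp r1 * w1 ^ 2) * (Real.exp (-r1) * (Real.exp r0 * w0 ^ 2))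
        = (Real.exp (-r0) * Real.exp r0) * ((Real.exp (-r1) * Real.exp r1) * (w1^2 * w0^2)) := by
      ring
    rw [this, ← Real.exp_add, ← Real.exp_add]
    simp
    ring
  have hXpos : 0 ≤ X := by positivity
  have hYpos : 0 ≤ Y := by positivity
  have h2 : 2 * (w0 * w1) ≤ X + Y := by
    nlinarith [sq_nonneg (X - Y), mul_nonneg hw0 hw1, sq_nonneg (X + Y)]
  nlinarith [k0, k1, h2]

theorem master : ∀ (n : ℕ) (h : (Fin n → ℝ) → ℝ) (L : ℝ), 0 ≤ L →
    ConvexOn ℝ Set.univ h →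
    (∀ x y, h x ≤ h y + L * Real.sqrt (∑ j, (x j - y j)^2)) →
    (∑ ε : Fin n → Bool, Real.exp (Qinf h (bitVec ε))) *
      (∑ δ : Fin n → Bool, Real.exp (-h (bitVec δ))) ≤ 4 ^ n := by
  intro n
  induction n with
  | zero =>
    intro h L hL hconv hlip
    have huniq : ∀ x y : Fin 0 → ℝ, x = y := fun x y => Subsingleton.elim x y
    have e1 : ∀ ε : Fin 0 → Bool, Qinf h (bitVec ε) = h (bitVec ε) := by
      intro ε
      have hc : (fun y : Fin 0 → ℝ => h y + (∑ j, (bitVec ε j - y j)^2)/2)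
          = fun _ => h (bitVec ε) := by
        funext y
        rw [Subsingleton.elim y (bitVec ε)]
        simp
      rw [Qinf, hc, ciInf_const]
    rw [pow_zero, Fintype.sum_unique, Fintype.sum_unique, e1, ← Real.exp_add]
    simp
  | succ n IH =>
    intro h L hL hconv hlip
    set Z := ∑ δ : Fin (n+1) → Bool, Real.exp (-h (bitVec δ)) with hZ
    have hZpos : 0 < Z := by
      rw [hZ]
      exact Finset.sum_pos (fun i _ => Real.exp_pos _) ⟨fun _ => false, Finset.mem_univ _⟩
    -- w c
    set w : Bool → ℝ := fun c => ∑ δ' : Fin n → Bool,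
      Real.exp (-h (Fin.cons (if c then (1:ℝ) else 0) (bitVec δ'))) with hw
    have hwpos : ∀ c, 0 < w c := by
      intro c
      exact Finset.sum_pos (fun i _ => Real.exp_pos _) ⟨fun _ => false, Finset.mem_univ _⟩
    have hZsplit : Z = w false + w true := by
      rw [hZ, sum_split]
      rw [show ∀ g : Bool → ℝ, ∑ c : Bool, g c = g false + g true from fun g => by
        simp [Fintype.sum_bool]; ring]
      simp only [hw, bitVec_cons]
    -- IH applied
    have hIH : ∀ c : Bool, (∑ ε' : Fin n → Bool,
        Real.exp (rho h (bitVec ε') (if c then (1:ℝ) else 0))) * w c ≤ 4 ^ n := by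
      intro c
      exact IH (fun y' => h (Fin.cons (if c then (1:ℝ) else 0) y')) L hL
        (cons_convex hconv _) (cons_lip hlip _)
    -- key pointwise bound
    have key : ∀ x' : Fin n → Bool,
        (∑ c : Bool, Real.exp (Qinf h (Fin.cons (if c then (1:ℝ) else 0) (bitVec x')))) * Z^2
          ≤ 4 * ∑ c : Bool, Real.exp (rho h (bitVec x') (if c then (1:ℝ) else 0)) * (w c)^2 := by
      intro x'
      have hrconv := rho_convex hL hconv hlip (bitVec x')
      have hrlip := rho_lip hL hlip (bitVec x')
      have h2 := onedim (rho h (bitVec x')) hrconv L hL hrlip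
      have h1 : (∑ c : Bool, Real.exp (Qinf h (Fin.cons (if c then (1:ℝ) else 0) (bitVec x'))))
          ≤ Real.exp (Q1 (rho h (bitVec x')) 0) + Real.exp (Q1 (rho h (bitVec x')) 1) := by
        rw [show ∀ g : Bool → ℝ, ∑ c : Bool, g c = g false + g true from fun g => by
          simp [Fintype.sum_bool]; ring]
        simp only [if_true, if_false]
        exact add_le_add (Real.exp_le_exp.2 (Qdecomp hL hlip (bitVec x') 0))
          (Real.exp_le_exp.2 (Qdecomp hL hlip (bitVec x') 1))
      have h3 : Z^2 ≤ (Real.exp (-(rho h (bitVec x') 0)) + Real.exp (-(rho h (bitVec x') 1)))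
          * (Real.exp (rho h (bitVec x') 0) * (w false)^2
            + Real.exp (rho h (bitVec x') 1) * (w true)^2) := by
        rw [hZsplit]
        exact cs2 _ _ _ _ (le_of_lt (hwpos false)) (le_of_lt (hwpos true))
      have hTpos : 0 ≤ Real.exp (rho h (bitVec x') 0) * (w false)^2
          + Real.exp (rho h (bitVec x') 1) * (w true)^2 :=
        add_nonneg (mul_nonneg (Real.exp_pos _).le (sq_nonneg _)) (mul_nonneg (Real.exp_pos _).le (sq_nonneg _))
      have hQpos : 0 ≤ ∑ c : Bool, Real.exp (Qinf h (Fin.cons (if c then (1:ℝ) else 0) (bitVec x'))) :=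
        Finset.sum_nonneg (fun c _ => (Real.exp_pos _).le)
      calc (∑ c : Bool, Real.exp (Qinf h (Fin.cons (if c then (1:ℝ) else 0) (bitVec x')))) * Z^2
          ≤ (Real.exp (Q1 (rho h (bitVec x')) 0) + Real.exp (Q1 (rho h (bitVec x')) 1)) * Z^2 :=
            mul_le_mul_of_nonneg_right h1 (sq_nonneg Z)
        _ ≤ (Real.exp (Q1 (rho h (bitVec x')) 0) + Real.exp (Q1 (rho h (bitVec x')) 1)) *
            ((Real.exp (-(rho h (bitVec x') 0)) + Real.exp (-(rho h (bitVec x') 1)))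
              * (Real.exp (rho h (bitVec x') 0) * (w false)^2
                + Real.exp (rho h (bitVec x') 1) * (w true)^2)) :=
            mul_le_mul_of_nonneg_left h3 (by positivity)
        _ = ((Real.exp (Q1 (rho h (bitVec x')) 0) + Real.exp (Q1 (rho h (bitVec x')) 1)) *
            (Real.exp (-(rho h (bitVec x') 0)) + Real.exp (-(rho h (bitVec x') 1))))
              * (Real.exp (rho h (bitVec x') 0) * (w false)^2
                + Real.exp (rho h (bitVec x') 1) * (w true)^2) := by ring
        _ ≤ 4 * (Real.exp (rho h (bitVec x') 0) * (w false)^2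
                + Real.exp (rho h (bitVec x') 1) * (w true)^2) :=
            mul_le_mul_of_nonneg_right h2 hTpos
        _ = 4 * ∑ c : Bool, Real.exp (rho h (bitVec x') (if c then (1:ℝ) else 0)) * (w c)^2 := by
            rw [show ∀ g : Bool → ℝ, ∑ c : Bool, g c = g false + g true from fun g => by
              simp [Fintype.sum_bool]; ring]
            norm_num
    -- sum up
    have hA : (∑ ε : Fin (n+1) → Bool, Real.exp (Qinf h (bitVec ε))) * Z^2
        ≤ 4 * ∑ c : Bool, (∑ x' : Fin n → Bool,
            Real.exp (rho h (bitVec x') (if c then (1:ℝ) else 0))) * (w c)^2 := by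
      rw [sum_split (fun ε => Real.exp (Qinf h (bitVec ε)))]
      simp only [bitVec_cons]
      rw [Finset.sum_comm, Finset.sum_mul]
      calc ∑ x' : Fin n → Bool, (∑ c : Bool,
            Real.exp (Qinf h (Fin.cons (if c then (1:ℝ) else 0) (bitVec x')))) * Z^2
          ≤ ∑ x' : Fin n → Bool, 4 * ∑ c : Bool,
            Real.exp (rho h (bitVec x') (if c then (1:ℝ) else 0)) * (w c)^2 :=
            Finset.sum_le_sum (fun x' _ => key x')
        _ = 4 * ∑ c : Bool, (∑ x' : Fin n → Bool,
            Real.exp (rho h (bitVec x') (if c then (1:ℝ) else 0))) * (w c)^2 := by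
            rw [← Finset.mul_sum, Finset.sum_comm]
            congr 1
            refine Finset.sum_congr rfl (fun c _ => ?_)
            rw [Finset.sum_mul]
    have hB : ∀ c : Bool, (∑ x' : Fin n → Bool,
        Real.exp (rho h (bitVec x') (if c then (1:ℝ) else 0))) * (w c)^2 ≤ 4^n * w c := by
      intro c
      have := hIH c
      have hwc := hwpos c
      nlinarith [this, hwc]
    have hfin : (∑ ε : Fin (n+1) → Bool, Real.exp (Qinf h (bitVec ε))) * Z^2
        ≤ 4^(n+1) * Z := by
      calc (∑ ε : Fin (n+1) → Bool, Real.exp (Qinf h (bitVec ε))) * Z^2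
          ≤ 4 * ∑ c : Bool, (∑ x' : Fin n → Bool,
              Real.exp (rho h (bitVec x') (if c then (1:ℝ) else 0))) * (w c)^2 := hA
        _ ≤ 4 * ∑ c : Bool, 4^n * w c := by
            have := Finset.sum_le_sum (fun c (_ : c ∈ Finset.univ) => hB c)
            linarith
        _ = 4^(n+1) * Z := by
            rw [show ∀ g : Bool → ℝ, ∑ c : Bool, g c = g false + g true from fun g => by
              simp [Fintype.sum_bool]; ring]
            rw [hZsplit]
            ring
    have hAZ : ((∑ ε : Fin (n+1) → Bool, Real.exp (Qinf h (bitVec ε))) * Z) * Z ≤ (4^(n+1)) * Z := by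
      calc ((∑ ε : Fin (n+1) → Bool, Real.exp (Qinf h (bitVec ε))) * Z) * Z
          = (∑ ε : Fin (n+1) → Bool, Real.exp (Qinf h (bitVec ε))) * Z^2 := by ring
        _ ≤ 4^(n+1) * Z := hfin
    exact le_of_mul_le_mul_right hAZ hZpos

end master


section assembly

variable {d : ℕ}

lemma orth_sum_sq {O : Matrix (Fin d) (Fin d) ℝ} (hO : IsOrthogonalMat O) (v : Fin d → ℝ) :
    ∑ i, (O.mulVec v i)^2 = ∑ j, (v j)^2 := by
  have key : ∀ j k, (∑ i, O i j * O i k) = if j = k then (1:ℝ) else 0 := by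
    intro j k
    have h1 := congrFun (congrFun hO.1 j) k
    rw [Matrix.mul_apply] at h1
    simpa [Matrix.transpose_apply, Matrix.one_apply] using h1
  have hmv : ∀ i, O.mulVec v i = ∑ j, O i j * v j := by
    intro i; rfl
  calc ∑ i, (O.mulVec v i)^2
      = ∑ i, ∑ j, ∑ k, O i j * O i k * (v j * v k) := by
        refine Finset.sum_congr rfl (fun i _ => ?_)
        rw [hmv i, sq, Finset.sum_mul_sum]
        refine Finset.sum_congr rfl (fun j _ => ?_)
        refine Finset.sum_congr rfl (fun k _ => ?_)
        ring
    _ = ∑ j, ∑ k, (∑ i, O i j * O i k) * (v j * v k) := by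
        rw [Finset.sum_comm]
        refine Finset.sum_congr rfl (fun j _ => ?_)
        rw [Finset.sum_comm]
        refine Finset.sum_congr rfl (fun k _ => ?_)
        rw [Finset.sum_mul]
    _ = ∑ j, (v j)^2 := by
        refine Finset.sum_congr rfl (fun j _ => ?_)
        rw [Finset.sum_congr rfl (fun k (_ : k ∈ Finset.univ) => by rw [key j k])]
        simp [sq]

lemma f_convex (O : Matrix (Fin d) (Fin d) ℝ) (c : ℝ) (hc : 0 ≤ c) :
    ConvexOn ℝ Set.univ (fun x : Fin d → ℝ => c * l1Norm (O.mulVec x)) := by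
  refine ⟨convex_univ, ?_⟩
  intro x _ y _ a b ha hb hab
  simp only [smul_eq_mul]
  have hkey : l1Norm (O.mulVec (a • x + b • y)) ≤ a * l1Norm (O.mulVec x) + b * l1Norm (O.mulVec y) := by
    have hmv : O.mulVec (a • x + b • y) = a • O.mulVec x + b • O.mulVec y := by
      rw [Matrix.mulVec_add, Matrix.mulVec_smul, Matrix.mulVec_smul]
    rw [l1Norm, hmv]
    rw [l1Norm, l1Norm, Finset.mul_sum, Finset.mul_sum, ← Finset.sum_add_distrib]
    refine Finset.sum_le_sum (fun i _ => ?_)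
    simp only [Pi.add_apply, Pi.smul_apply, smul_eq_mul]
    calc |a * O.mulVec x i + b * O.mulVec y i|
        ≤ |a * O.mulVec x i| + |b * O.mulVec y i| := abs_add_le _ _
      _ = a * |O.mulVec x i| + b * |O.mulVec y i| := by
          rw [abs_mul, abs_mul, abs_of_nonneg ha, abs_of_nonneg hb]
  nlinarith [hkey, mul_le_mul_of_nonneg_left hkey hc]

lemma f_lip {O : Matrix (Fin d) (Fin d) ℝ} (hO : IsOrthogonalMat O) (c : ℝ) (hc : 0 ≤ c) :
    ∀ x y : Fin d → ℝ, c * l1Norm (O.mulVec x) ≤ c * l1Norm (O.mulVec y)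
      + (c * Real.sqrt d) * Real.sqrt (∑ j, (x j - y j)^2) := by
  intro x y
  have h1 : l1Norm (O.mulVec x) - l1Norm (O.mulVec y) ≤ ∑ i, |O.mulVec (x - y) i| := by
    rw [l1Norm, l1Norm, ← Finset.sum_sub_distrib]
    refine Finset.sum_le_sum (fun i _ => ?_)
    have : O.mulVec (x - y) i = O.mulVec x i - O.mulVec y i := by
      rw [Matrix.mulVec_sub]; rfl
    rw [this]
    exact abs_sub_abs_le_abs_sub _ _
  have h2 : (∑ i, |O.mulVec (x - y) i|)^2 ≤ (d : ℝ) * ∑ j, (x j - y j)^2 := by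
    have hcs := sq_sum_le_card_mul_sum_sq (s := Finset.univ)
      (f := fun i => |O.mulVec (x - y) i|)
    have hsq : ∑ i, |O.mulVec (x - y) i|^2 = ∑ j, (x j - y j)^2 := by
      calc ∑ i, |O.mulVec (x - y) i|^2 = ∑ i, (O.mulVec (x - y) i)^2 := by
            refine Finset.sum_congr rfl (fun i _ => sq_abs _)
        _ = ∑ j, ((x - y) j)^2 := orth_sum_sq hO (x - y)
        _ = ∑ j, (x j - y j)^2 := rfl
    calc (∑ i, |O.mulVec (x - y) i|)^2
        ≤ (Finset.univ.card : ℝ) * ∑ i, |O.mulVec (x - y) i|^2 := by exact_mod_cast hcs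
      _ = (d : ℝ) * ∑ j, (x j - y j)^2 := by
          rw [hsq, Finset.card_univ, Fintype.card_fin]
  have h3 : ∑ i, |O.mulVec (x - y) i| ≤ Real.sqrt d * Real.sqrt (∑ j, (x j - y j)^2) := by
    rw [← Real.sqrt_mul (by positivity : (0:ℝ) ≤ (d:ℝ))]
    rw [Real.le_sqrt (by positivity) (by positivity)]
    exact h2
  have h4 : c * (l1Norm (O.mulVec x) - l1Norm (O.mulVec y)) ≤ c * (Real.sqrt d * Real.sqrt (∑ j, (x j - y j)^2)) :=
    mul_le_mul_of_nonneg_left (le_trans h1 h3) hc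
  nlinarith [h4]

end assembly

lemma product_bound {d : ℕ} {O : Matrix (Fin d) (Fin d) ℝ} (hO : IsOrthogonalMat O) (t : ℝ) :
    (∑ x : Fin d → Bool, Real.exp (|t| * l1Norm (O.mulVec (bitVec x)))) *
      (∑ y : Fin d → Bool, Real.exp (-(|t| * l1Norm (O.mulVec (bitVec y)))))
      ≤ 4^d * Real.exp (t^2 * (d:ℝ) / 2) := by
  have hLnn : (0:ℝ) ≤ |t| * Real.sqrt d := by positivity
  have hconv := f_convex O |t| (abs_nonneg t)
  have hlip := f_lip hO |t| (abs_nonneg t)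
  have hmaster := master d (fun x => |t| * l1Norm (O.mulVec x)) (|t| * Real.sqrt d) hLnn hconv hlip
  have hLsq : (|t| * Real.sqrt d)^2 = t^2 * (d:ℝ) := by
    rw [mul_pow, sq_abs, Real.sq_sqrt (by positivity : (0:ℝ) ≤ (d:ℝ))]
  have h1 : ∀ x : Fin d → Bool, Real.exp (|t| * l1Norm (O.mulVec (bitVec x)))
      ≤ Real.exp (t^2 * (d:ℝ) / 2)
        * Real.exp (Qinf (fun x => |t| * l1Norm (O.mulVec x)) (bitVec x)) := by
    intro x
    have hq := Qinf_ge hLnn hlip (bitVec x)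
    rw [hLsq] at hq
    rw [← Real.exp_add]
    apply Real.exp_le_exp.2
    linarith
  calc (∑ x : Fin d → Bool, Real.exp (|t| * l1Norm (O.mulVec (bitVec x)))) *
      (∑ y : Fin d → Bool, Real.exp (-(|t| * l1Norm (O.mulVec (bitVec y)))))
      ≤ (∑ x : Fin d → Bool, Real.exp (t^2 * (d:ℝ) / 2)
          * Real.exp (Qinf (fun x => |t| * l1Norm (O.mulVec x)) (bitVec x))) *
        (∑ y : Fin d → Bool, Real.exp (-(|t| * l1Norm (O.mulVec (bitVec y))))) :=
        mul_le_mul_of_nonneg_right (Finset.sum_le_sum (fun x _ => h1 x)) (by positivity)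
    _ = Real.exp (t^2 * (d:ℝ) / 2) *
        ((∑ x : Fin d → Bool, Real.exp (Qinf (fun x => |t| * l1Norm (O.mulVec x)) (bitVec x))) *
          (∑ y : Fin d → Bool, Real.exp (-(|t| * l1Norm (O.mulVec (bitVec y)))))) := by
        rw [← Finset.mul_sum]; ring
    _ ≤ Real.exp (t^2 * (d:ℝ) / 2) * 4^d := mul_le_mul_of_nonneg_left hmaster (by positivity)
    _ = 4^d * Real.exp (t^2 * (d:ℝ) / 2) := by ring


/-- for `x` uniform on `{0,1}^d`, the random variable `‖Ox‖₁` is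
subgaussian with variance proxy `d`: its centered moment generating function is
bounded by `exp(t²d/2)`. -/
theorem l1_norm_rotated_cube_subgaussian (d : ℕ) (hd : 1 ≤ d)
    (O : Matrix (Fin d) (Fin d) ℝ) (hO : IsOrthogonalMat O)
    (μ : ℝ) (hμ : μ = ((2 : ℝ) ^ d)⁻¹ * ∑ x : Fin d → Bool, l1Norm (O.mulVec (bitVec x)))
    (t : ℝ) :
    ((2 : ℝ) ^ d)⁻¹ *
        ∑ x : Fin d → Bool, Real.exp (t * (l1Norm (O.mulVec (bitVec x)) - μ))
      ≤ Real.exp (t ^ 2 * d / 2) := by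
  have h2d : (0:ℝ) < 2^d := by positivity
  have hcard : (Fintype.card (Fin d → Bool) : ℝ) = 2^d := by
    rw [Fintype.card_fun]
    push_cast
    simp
  have hsumf : ∑ x : Fin d → Bool, l1Norm (O.mulVec (bitVec x)) = 2^d * μ := by
    rw [hμ]
    field_simp
  have hsum : ∑ y : Fin d → Bool, (l1Norm (O.mulVec (bitVec y)) - μ) = 0 := by
    rw [Finset.sum_sub_distrib, Finset.sum_const, Finset.card_univ, nsmul_eq_mul, hcard, hsumf]
    ring
  have hJ : (2:ℝ)^d ≤ ∑ y : Fin d → Bool, Real.exp (-(t * (l1Norm (O.mulVec (bitVec y)) - μ))) := by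
    calc (2:ℝ)^d
        = ∑ y : Fin d → Bool, ((-(t * (l1Norm (O.mulVec (bitVec y)) - μ))) + 1) := by
          rw [Finset.sum_add_distrib, Finset.sum_const, Finset.card_univ, nsmul_eq_mul, hcard]
          rw [show (fun y : Fin d → Bool => -(t * (l1Norm (O.mulVec (bitVec y)) - μ)))
              = fun y => (-t) * (l1Norm (O.mulVec (bitVec y)) - μ) from by funext y; ring]
          rw [← Finset.mul_sum, hsum]
          ring
      _ ≤ ∑ y : Fin d → Bool, Real.exp (-(t * (l1Norm (O.mulVec (bitVec y)) - μ))) :=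
          Finset.sum_le_sum (fun y _ => Real.add_one_le_exp _)
  have step1 : ((2:ℝ)^d)⁻¹ * (∑ x : Fin d → Bool, Real.exp (t * (l1Norm (O.mulVec (bitVec x)) - μ)))
      ≤ (((2:ℝ)^d)⁻¹ * ∑ x : Fin d → Bool, Real.exp (t * (l1Norm (O.mulVec (bitVec x)) - μ))) *
        (((2:ℝ)^d)⁻¹ * ∑ y : Fin d → Bool, Real.exp (-(t * (l1Norm (O.mulVec (bitVec y)) - μ)))) := by
    have hpos : (0:ℝ) ≤ ((2:ℝ)^d)⁻¹ *
        ∑ x : Fin d → Bool, Real.exp (t * (l1Norm (O.mulVec (bitVec x)) - μ)) :=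
      mul_nonneg (by positivity) (Finset.sum_nonneg (fun x _ => (Real.exp_pos _).le))
    have h1 : (1:ℝ) ≤ ((2:ℝ)^d)⁻¹ *
        ∑ y : Fin d → Bool, Real.exp (-(t * (l1Norm (O.mulVec (bitVec y)) - μ))) := by
      calc (1:ℝ) = ((2:ℝ)^d)⁻¹ * 2^d := by field_simp
        _ ≤ _ := mul_le_mul_of_nonneg_left hJ (by positivity)
    exact le_mul_of_one_le_right hpos h1
  have step2 : (((2:ℝ)^d)⁻¹ * ∑ x : Fin d → Bool, Real.exp (t * (l1Norm (O.mulVec (bitVec x)) - μ))) *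
        (((2:ℝ)^d)⁻¹ * ∑ y : Fin d → Bool, Real.exp (-(t * (l1Norm (O.mulVec (bitVec y)) - μ))))
      = (((2:ℝ)^d)⁻¹ * ((2:ℝ)^d)⁻¹) *
        ((∑ x : Fin d → Bool, Real.exp (t * l1Norm (O.mulVec (bitVec x)))) *
          (∑ y : Fin d → Bool, Real.exp (-(t * l1Norm (O.mulVec (bitVec y)))))) := by
    have e1 : ∀ x : Fin d → Bool, Real.exp (t * (l1Norm (O.mulVec (bitVec x)) - μ))
        = Real.exp (t * l1Norm (O.mulVec (bitVec x))) * Real.exp (-(t*μ)) := by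
      intro x; rw [← Real.exp_add]; congr 1; ring
    have e2 : ∀ y : Fin d → Bool, Real.exp (-(t * (l1Norm (O.mulVec (bitVec y)) - μ)))
        = Real.exp (-(t * l1Norm (O.mulVec (bitVec y)))) * Real.exp (t*μ) := by
      intro y; rw [← Real.exp_add]; congr 1; ring
    rw [Finset.sum_congr rfl (fun x _ => e1 x), Finset.sum_congr rfl (fun y _ => e2 y),
      ← Finset.sum_mul, ← Finset.sum_mul]
    have e3 : Real.exp (-(t*μ)) * Real.exp (t*μ) = 1 := by
      rw [← Real.exp_add]; simp
    linear_combination (((2:ℝ)^d)⁻¹ * ((2:ℝ)^d)⁻¹ *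
      (∑ x : Fin d → Bool, Real.exp (t * l1Norm (O.mulVec (bitVec x)))) *
      (∑ y : Fin d → Bool, Real.exp (-(t * l1Norm (O.mulVec (bitVec y)))))) * e3
  have step3 : (∑ x : Fin d → Bool, Real.exp (t * l1Norm (O.mulVec (bitVec x)))) *
        (∑ y : Fin d → Bool, Real.exp (-(t * l1Norm (O.mulVec (bitVec y)))))
      ≤ 4^d * Real.exp (t^2 * (d:ℝ) / 2) := by
    rcases abs_cases t with ⟨habs, _⟩ | ⟨habs, _⟩
    · have := product_bound hO t
      rw [habs] at this
      exact this
    · have := product_bound hO t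
      rw [habs] at this
      simp only [neg_mul, neg_neg] at this
      rw [mul_comm]
      exact this
  have h4d : ((4:ℝ)^d) = (2:ℝ)^d * (2:ℝ)^d := by
    rw [← mul_pow]; norm_num
  calc ((2 : ℝ) ^ d)⁻¹ *
        ∑ x : Fin d → Bool, Real.exp (t * (l1Norm (O.mulVec (bitVec x)) - μ))
      ≤ (((2:ℝ)^d)⁻¹ * ∑ x : Fin d → Bool, Real.exp (t * (l1Norm (O.mulVec (bitVec x)) - μ))) *
        (((2:ℝ)^d)⁻¹ * ∑ y : Fin d → Bool, Real.exp (-(t * (l1Norm (O.mulVec (bitVec y)) - μ)))) := step1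
    _ = (((2:ℝ)^d)⁻¹ * ((2:ℝ)^d)⁻¹) *
        ((∑ x : Fin d → Bool, Real.exp (t * l1Norm (O.mulVec (bitVec x)))) *
          (∑ y : Fin d → Bool, Real.exp (-(t * l1Norm (O.mulVec (bitVec y)))))) := step2
    _ ≤ (((2:ℝ)^d)⁻¹ * ((2:ℝ)^d)⁻¹) * (4^d * Real.exp (t^2 * (d:ℝ) / 2)) :=
        mul_le_mul_of_nonneg_left step3 (by positivity)
    _ = Real.exp (t ^ 2 * d / 2) := by
        rw [h4d]
        field_simp
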